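/- For n ≥ 2k³, if A and B are disjoint cross-intersecting families of k-subsets of [n], then min{|A|, |B|} ≤ (1/2)·C(n-1, k-1). -/

import Mathlib

open Finset

lemma filter_two_mem_card {n k : ℕ} (x y : Fin n) (hxy : x ≠ y) :
    ((Finset.powersetCard k (Finset.univ : Finset (Fin n))).filter
      (fun s => x ∈ s ∧ y ∈ s)).card ≤ (n - 2).choose (k - 2) := by
  have hc : (((Finset.univ : Finset (Fin n)).erase x).erase y).card = n - 2 := by
    rw [Finset.card_erase_of_mem (Finset.mem_erase.2 ⟨hxy.symm, Finset.mem_univ y⟩),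
      Finset.card_erase_of_mem (Finset.mem_univ x), Finset.card_univ, Fintype.card_fin]
    omega
  have htarget : (Finset.powersetCard (k - 2)
      (((Finset.univ : Finset (Fin n)).erase x).erase y)).card = (n - 2).choose (k - 2) := by
    rw [Finset.card_powersetCard, hc]
  rw [← htarget]
  apply Finset.card_le_card_of_injOn (fun s => (s.erase x).erase y)
  · intro s hs
    simp only [Finset.mem_coe, Finset.mem_filter, Finset.mem_powersetCard] at hs
    obtain ⟨⟨-, hcard⟩, hx, hy⟩ := hs
    rw [Finset.mem_coe, Finset.mem_powersetCard]
    constructor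
    · exact Finset.erase_subset_erase _ (Finset.erase_subset_erase _ (Finset.subset_univ s))
    · rw [Finset.card_erase_of_mem (Finset.mem_erase.2 ⟨hxy.symm, hy⟩),
        Finset.card_erase_of_mem hx, hcard]
      omega
  · intro s hs t ht hst
    simp only [Finset.coe_filter, Set.mem_setOf_eq, Finset.mem_powersetCard] at hs ht
    have hrecover : ∀ u : Finset (Fin n), x ∈ u → y ∈ u →
        insert x (insert y ((u.erase x).erase y)) = u := by
      intro u hxu hyu
      rw [Finset.insert_erase (Finset.mem_erase.2 ⟨hxy.symm, hyu⟩), Finset.insert_erase hxu]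
    calc s = insert x (insert y ((s.erase x).erase y)) :=
            (hrecover s hs.2.1 hs.2.2).symm
      _ = insert x (insert y ((t.erase x).erase y)) := by simp only at hst; rw [hst]
      _ = t := hrecover t ht.2.1 ht.2.2

lemma cross_count {n k : ℕ} (B : Finset (Finset (Fin n)))
    (hB : B ⊆ Finset.powersetCard k Finset.univ)
    (a a' : Finset (Fin n)) (hd : Disjoint a a')
    (hmeet : ∀ b ∈ B, (a ∩ b).Nonempty ∧ (a' ∩ b).Nonempty) :
    B.card ≤ a.card * a'.card * (n - 2).choose (k - 2) := by
  have hsub : B ⊆ (a ×ˢ a').biUnion (fun p =>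
      (Finset.powersetCard k (Finset.univ : Finset (Fin n))).filter
        (fun s => p.1 ∈ s ∧ p.2 ∈ s)) := by
    intro b hb
    obtain ⟨⟨x, hx⟩, ⟨y, hy⟩⟩ := hmeet b hb
    simp only [Finset.mem_inter] at hx hy
    refine Finset.mem_biUnion.2 ⟨(x, y), Finset.mem_product.2 ⟨hx.1, hy.1⟩, ?_⟩
    exact Finset.mem_filter.2 ⟨hB hb, hx.2, hy.2⟩
  calc B.card ≤ _ := Finset.card_le_card hsub
    _ ≤ ∑ p ∈ a ×ˢ a', ((Finset.powersetCard k (Finset.univ : Finset (Fin n))).filter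
        (fun s => p.1 ∈ s ∧ p.2 ∈ s)).card := Finset.card_biUnion_le
    _ ≤ ∑ _p ∈ a ×ˢ a', (n - 2).choose (k - 2) := by
        apply Finset.sum_le_sum
        rintro ⟨x, y⟩ hp
        rw [Finset.mem_product] at hp
        exact filter_two_mem_card x y (fun h => (Finset.disjoint_left.1 hd hp.1 (h ▸ hp.2)))
    _ = a.card * a'.card * (n - 2).choose (k - 2) := by
        rw [Finset.sum_const, Finset.card_product, smul_eq_mul]

theorem stmt_0 (n k : ℕ) (hn : n ≥ 2 * k ^ 3)
    (A B : Finset (Finset (Fin n)))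
    (hA : A ⊆ Finset.powersetCard k Finset.univ)
    (hB : B ⊆ Finset.powersetCard k Finset.univ)
    (hdisj : Disjoint A B)
    (hcross : ∀ a ∈ A, ∀ b ∈ B, (a ∩ b).Nonempty) :
    (min A.card B.card : ℚ) ≤ (1 / 2) * (n - 1).choose (k - 1) := by
  rcases Nat.lt_or_ge k 2 with hk | hk
  · -- k = 0 or 1 : one of the families is empty
    have hmin : A.card = 0 ∨ B.card = 0 := by
      rcases A.eq_empty_or_nonempty with rfl | ⟨a, ha⟩
      · simp
      rcases B.eq_empty_or_nonempty with rfl | ⟨b, hb⟩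
      · simp
      exfalso
      obtain ⟨x, hx⟩ := hcross a ha b hb
      rw [Finset.mem_inter] at hx
      have hak : a.card = k := (Finset.mem_powersetCard.1 (hA ha)).2
      have hbk : b.card = k := (Finset.mem_powersetCard.1 (hB hb)).2
      interval_cases k
      · exact absurd (Finset.card_eq_zero.1 hak ▸ hx.1) (Finset.notMem_empty x)
      · obtain ⟨u, hu⟩ := Finset.card_eq_one.1 hak
        obtain ⟨v, hv⟩ := Finset.card_eq_one.1 hbk
        subst hu hv
        simp only [Finset.mem_singleton] at hx
        have huv : ({u} : Finset (Fin n)) = {v} := by rw [← hx.1, ← hx.2]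
        exact Finset.disjoint_left.1 hdisj ha (huv ▸ hb)
    have h0 : (0 : ℚ) ≤ (1 / 2) * (n - 1).choose (k - 1) := by positivity
    rcases hmin with h | h
    · rw [h]
      exact le_trans (min_le_left _ _) (by simpa using h0)
    · rw [h]
      exact le_trans (min_le_right _ _) (by simpa using h0)
  · by_contra hcon
    push_neg at hcon
    obtain ⟨e, rfl⟩ : ∃ e, k = e + 2 := ⟨k - 2, by omega⟩
    set k := e + 2 with hkdef
    have hk3 : 1 ≤ k ^ 3 := Nat.one_le_iff_ne_zero.2 (pow_ne_zero 3 (by omega))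
    have hn2 : 2 ≤ n := le_trans (by linarith) hn
    have hchoose_eq : (n - 1) * (n - 2).choose (k - 2) = (n - 1).choose (k - 1) * (k - 1) := by
      have h1 : n - 1 = (n - 2) + 1 := by omega
      have h2 : k - 1 = (k - 2) + 1 := by omega
      rw [h1, h2]
      exact Nat.add_one_mul_choose_eq (n - 2) (k - 2)
    -- key arithmetic bound
    have harith : 2 * (k * k * (n - 2).choose (k - 2)) ≤ (n - 1).choose (k - 1) := by
      have hnk : 2 * (k * k) * (k - 1) ≤ n - 1 := by
        have h3 : 2 * (k * k) * (k - 1) + 1 ≤ n := by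
          have : 2 * ((e + 2) * (e + 2)) * (e + 1) + 1 ≤ 2 * (e + 2) ^ 3 := by nlinarith
          calc 2 * (k * k) * (k - 1) + 1 = 2 * ((e + 2) * (e + 2)) * (e + 1) + 1 := by
                norm_num [hkdef]
            _ ≤ 2 * (e + 2) ^ 3 := this
            _ ≤ n := hn
        omega
      have hmul : (2 * (k * k * (n - 2).choose (k - 2))) * (k - 1)
          ≤ ((n - 1).choose (k - 1)) * (k - 1) := by
        rw [← hchoose_eq]
        calc 2 * (k * k * (n - 2).choose (k - 2)) * (k - 1)
            = (2 * (k * k) * (k - 1)) * (n - 2).choose (k - 2) := by ring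
          _ ≤ (n - 1) * (n - 2).choose (k - 2) := Nat.mul_le_mul_right _ hnk
      exact Nat.le_of_mul_le_mul_right hmul (by omega)
    have hAq : ((n - 1).choose (k - 1) : ℚ) < 2 * A.card := by
      have := min_le_left (A.card : ℚ) (B.card : ℚ)
      linarith [hcon]
    have hBq : ((n - 1).choose (k - 1) : ℚ) < 2 * B.card := by
      have := min_le_right (A.card : ℚ) (B.card : ℚ)
      linarith [hcon]
    have hA2 : (n - 1).choose (k - 1) < 2 * A.card := by exact_mod_cast hAq
    have hB2 : (n - 1).choose (k - 1) < 2 * B.card := by exact_mod_cast hBq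
    have hcardk : ∀ ⦃s⦄, s ∈ A ∪ B → s.card = k := by
      intro s hs
      rcases Finset.mem_union.1 hs with h | h
      · exact (Finset.mem_powersetCard.1 (hA h)).2
      · exact (Finset.mem_powersetCard.1 (hB h)).2
    have hAint : ∀ a ∈ A, ∀ a' ∈ A, ¬ Disjoint a a' := by
      intro a ha a' ha' hd
      have hcount := cross_count B hB a a' hd
        (fun b hb => ⟨hcross a ha b hb, hcross a' ha' b hb⟩)
      rw [hcardk (Finset.mem_union_left _ ha), hcardk (Finset.mem_union_left _ ha')] at hcount
      linarith
    have hBint : ∀ b ∈ B, ∀ b' ∈ B, ¬ Disjoint b b' := by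
      intro b hb b' hb' hd
      have hcount := cross_count A hA b b' hd
        (fun a ha => ⟨Finset.inter_comm a b ▸ hcross a ha b hb,
          Finset.inter_comm a b' ▸ hcross a ha b' hb'⟩)
      rw [hcardk (Finset.mem_union_right _ hb), hcardk (Finset.mem_union_right _ hb')] at hcount
      linarith
    have hUint : ((A ∪ B : Finset (Finset (Fin n))) : Set (Finset (Fin n))).Intersecting := by
      intro a ha b hb
      rw [Finset.mem_coe, Finset.mem_union] at ha hb
      rcases ha with ha | ha <;> rcases hb with hb | hb
      · exact hAint a ha b hb
      · rw [Finset.disjoint_iff_inter_eq_empty]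
        exact fun h => by simpa [h] using (hcross a ha b hb)
      · rw [disjoint_comm, Finset.disjoint_iff_inter_eq_empty]
        exact fun h => by simpa [h] using (hcross b hb a ha)
      · exact hBint a ha b hb
    have hUsized : ((A ∪ B : Finset (Finset (Fin n))) : Set (Finset (Fin n))).Sized k :=
      fun s hs => hcardk hs
    have hhalf : k ≤ n / 2 := by
      rw [Nat.le_div_iff_mul_le (by norm_num)]
      calc k * 2 = 2 * k := by ring
        _ ≤ 2 * k ^ 3 := by nlinarith
        _ ≤ n := hn
    have hekr := Finset.erdos_ko_rado hUint hUsized hhalf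
    rw [Finset.card_union_of_disjoint hdisj] at hekr
    omega
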